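/- Let G act spherically transitively on T, let v_n ∈ L_n, and let u ∈ D(v_n). Then the permutation representation of G on F[L_{n+1}] is isomorphic to the direct sum of the representation on F[L_n] and the representation induced from the St_G(v_n)-representation F[D(v_n)]⁰ (the complement of the trivial representation in F[D(v_n)]), provided char(F) does not divide the Steinitz order of the closure of G. -/

import Mathlib

/-- Vertices of level `n` of the spherically symmetric rooted tree on `(X i)`. -/
abbrev Vert (X : ℕ → Type) (n : ℕ) := ∀ i : Fin n, X i.val

/-- The predecessor (parent) of a vertex of level `n+1`. -/
def pred {X : ℕ → Type} {n : ℕ} (v : Vert X (n + 1)) : Vert X n :=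
  fun i => v i.castSucc

/-- A (root-preserving) action of `G` on the tree: compatible actions on all levels. -/
structure TreeAction (X : ℕ → Type) (G : Type) [Group G] where
  ρ : ∀ n : ℕ, G →* Equiv.Perm (Vert X n)
  compat : ∀ (n : ℕ) (g : G) (v : Vert X (n + 1)), pred (ρ (n + 1) g v) = ρ n g (pred v)

variable {X : ℕ → Type} {G : Type} [Group G]

/-- Spherically transitive action. -/
def SphTrans (A : TreeAction X G) : Prop := ∀ (n : ℕ) (u v : Vert X n), ∃ g : G, A.ρ n g u = v

/-- Locally 2-transitive action. -/
def LocTwoTrans (A : TreeAction X G) : Prop :=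
  SphTrans A ∧ ∀ (n : ℕ) (u v : Vert X n), u ≠ v →
    ∀ u₁ u₂ v₁ v₂ : Vert X (n + 1), pred u₁ = u → pred u₂ = u → pred v₁ = v → pred v₂ = v →
      ∃ g : G, A.ρ n g u = u ∧ A.ρ n g v = v ∧ A.ρ (n + 1) g u₁ = u₂ ∧ A.ρ (n + 1) g v₁ = v₂

variable [∀ i, DecidableEq (X i)]

/-- Length of the longest common prefix of two vertices of level `n`. -/
def cpl {n : ℕ} (u v : Vert X n) : ℕ :=
  Nat.findGreatest (fun k => ∀ i : Fin n, (i : ℕ) < k → u i = v i) n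

/-- The shortest-path distance between two vertices of level `n`. -/
def tdist {n : ℕ} (u v : Vert X n) : ℕ := 2 * (n - cpl u v)

/-- The space of equivariant linear maps between two representations. -/
def repHom {F : Type} [Field F] {G : Type} [Monoid G] {V W : Type}
    [AddCommGroup V] [Module F V] [AddCommGroup W] [Module F W]
    (ρV : Representation F G V) (ρW : Representation F G W) :
    Submodule F (V →ₗ[F] W) where
  carrier := {φ | ∀ g : G, φ ∘ₗ ρV g = ρW g ∘ₗ φ}
  add_mem' := by
    intro a b ha hb g
    rw [LinearMap.add_comp, LinearMap.comp_add, ha g, hb g]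
  zero_mem' := by
    intro g
    simp
  smul_mem' := by
    intro c φ hφ g
    rw [LinearMap.smul_comp, LinearMap.comp_smul, hφ g]

/-- A representation is irreducible if it is nonzero and has no proper nonzero
invariant subspace. -/
def Representation.IsIrred {F : Type} [Field F] {G : Type} [Monoid G] {V : Type}
    [AddCommGroup V] [Module F V] (ρ : Representation F G V) : Prop :=
  Nontrivial V ∧ ∀ W : Submodule F V, (∀ g : G, ∀ x ∈ W, ρ g x ∈ W) → W = ⊥ ∨ W = ⊤

/-- A representation is trivial if the group acts identically. -/
def Representation.IsTriv {F : Type} [Field F] {G : Type} [Monoid G] {V : Type}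
    [AddCommGroup V] [Module F V] (ρ : Representation F G V) : Prop :=
  ∀ (g : G) (x : V), ρ g x = x

/-- `π` occurs in `ρ`, i.e. `π` is isomorphic to a subrepresentation of `ρ`. -/
def Representation.OccursIn {F : Type} [Field F] {G : Type} [Monoid G] {V W : Type}
    [AddCommGroup V] [Module F V] [AddCommGroup W] [Module F W]
    (π : Representation F G V) (ρ : Representation F G W) : Prop :=
  ∃ j : V →ₗ[F] W, Function.Injective j ∧ ∀ (g : G) (x : V), j (π g x) = ρ g (j x)

/-- The carrier of the representation induced from a representation `π` of a
subgroup `S ≤ G`: the functions `f : G → V` with `f (s * x) = π s (f x)`. -/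
def IndCarrier {F : Type} [Field F] {G : Type} [Group G] (S : Subgroup G) {V : Type}
    [AddCommGroup V] [Module F V] (π : Representation F S V) :
    Submodule F (G → V) where
  carrier := {f | ∀ (s : S) (x : G), f (↑s * x) = π s (f x)}
  add_mem' := by
    intro a b ha hb s x
    simp only [Pi.add_apply, ha s x, hb s x, map_add]
  zero_mem' := by
    intro s x
    simp
  smul_mem' := by
    intro c f hf s x
    simp only [Pi.smul_apply, hf s x, map_smul]

/-- The representation of `G` induced from a representation `π` of a subgroup
`S ≤ G`, by right translation on functions. -/
def IndRep {F : Type} [Field F] {G : Type} [Group G] (S : Subgroup G) {V : Type}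
    [AddCommGroup V] [Module F V] (π : Representation F S V) :
    Representation F G (IndCarrier S π) where
  toFun h :=
    { toFun := fun f => ⟨fun x => (f : G → V) (x * h), by
        intro s x
        have := f.2 s (x * h)
        simpa [mul_assoc] using this⟩
      map_add' := fun f g => rfl
      map_smul' := fun c f => rfl }
  map_one' := by
    apply LinearMap.ext
    intro f
    apply Subtype.ext
    funext x
    simp
  map_mul' := by
    intro a b
    apply LinearMap.ext
    intro f
    apply Subtype.ext
    funext x
    simp [mul_assoc]

/-- The stabiliser of the vertex `v` in `G`. -/
def stab {X : ℕ → Type} {G : Type} [Group G] (A : TreeAction X G) {n : ℕ}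
    (v : Vert X n) : Subgroup G where
  carrier := {g | A.ρ n g v = v}
  one_mem' := by simp
  mul_mem' := by
    intro a b ha hb
    simp only [Set.mem_setOf_eq, map_mul, Equiv.Perm.mul_apply] at *
    rw [hb, ha]
  inv_mem' := by
    intro a ha
    simp only [Set.mem_setOf_eq, map_inv] at *
    exact (Equiv.symm_apply_eq _).mpr ha.symm

/-- The set of descendants of the vertex `v`. -/
def Desc (X : ℕ → Type) {n : ℕ} (v : Vert X n) : Type :=
  {w : Vert X (n + 1) // pred w = v}

/-- The stabiliser of `v` permutes the descendants of `v`. -/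
def descPermHom {X : ℕ → Type} {G : Type} [Group G] (A : TreeAction X G) {n : ℕ}
    (v : Vert X n) : stab A v →* Equiv.Perm (Desc X v) where
  toFun g :=
    { toFun := fun w => ⟨A.ρ (n + 1) g.1 w.1, by rw [A.compat, w.2]; exact g.2⟩
      invFun := fun w => ⟨A.ρ (n + 1) g.1⁻¹ w.1, by
        rw [A.compat, w.2]
        exact (stab A v).inv_mem g.2⟩
      left_inv := fun w => Subtype.ext (by
        simp [← Equiv.Perm.mul_apply, ← map_mul])
      right_inv := fun w => Subtype.ext (by
        show A.ρ (n + 1) g.1 (A.ρ (n + 1) g.1⁻¹ w.1) = w.1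
        rw [← Equiv.Perm.mul_apply, ← map_mul, mul_inv_cancel, map_one, Equiv.Perm.one_apply]) }
  map_one' := by
    ext w
    apply Subtype.ext
    simp [Equiv.Perm.one_apply]
    rfl
  map_mul' := by
    intro a b
    ext w
    apply Subtype.ext
    simp [Equiv.Perm.mul_apply]
    rfl

/-- The permutation representation of the stabiliser of `v` on `F[D(v)]`. -/
noncomputable def descRep (F : Type) [Field F] {X : ℕ → Type} {G : Type} [Group G]
    (A : TreeAction X G) {n : ℕ} (v : Vert X n) :
    Representation F (stab A v) (Desc X v →₀ F) :=
  letI : MulAction (stab A v) (Desc X v) := MulAction.compHom _ (descPermHom A v)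
  { toFun := fun g => Finsupp.lmapDomain F F (g • ·)
    map_one' := by ext x y; simp
    map_mul' := fun x y => by ext z w; simp [mul_smul] }

/-- The permutation representation of `G` on `F[L_n]`. -/
noncomputable def levelRep (F : Type) [Field F] {X : ℕ → Type} {G : Type} [Group G]
    (A : TreeAction X G) (n : ℕ) : Representation F G (Vert X n →₀ F) :=
  letI : MulAction G (Vert X n) := MulAction.compHom _ (A.ρ n)
  { toFun := fun g => Finsupp.lmapDomain F F (g • ·)
    map_one' := by ext x y; simp
    map_mul' := fun x y => by ext z w; simp [mul_smul] }

/-- The subspace of `F[α]` of formal sums whose coefficients sum to zero. -/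
noncomputable def zeroSum (F : Type) [Field F] (α : Type) : Submodule F (α →₀ F) :=
  LinearMap.ker (Finsupp.linearCombination F (fun _ : α => (1 : F)))

section AuxHelpers

open Finset

lemma aux_mem_zeroSum_iff {F : Type} [Field F] {α : Type} [Fintype α] (x : α →₀ F) :
    x ∈ zeroSum F α ↔ ∑ a, x a = 0 := by
  unfold zeroSum
  rw [LinearMap.mem_ker, Finsupp.linearCombination_apply, Finsupp.sum_fintype]
  · simp
  · simp

lemma aux_sum_fiber {α M : Type} [Fintype α] [AddCommMonoid M] (p : α → Prop)
    [DecidablePred p] (f : α → M) :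
    ∑ w : {w // p w}, f w.1 = ∑ w, if p w then f w else 0 := by
  rw [← Finset.sum_filter]
  exact (Finset.sum_subtype _ (by simp) f).symm

variable {X : ℕ → Type} {G : Type} [Group G]

/-- The descendants of `z` are equivalent to `X n`. -/
def fiberEquiv {n : ℕ} (z : Vert X n) : Desc X z ≃ X n where
  toFun w := w.1 (Fin.last n)
  invFun a := ⟨Fin.snoc z a, funext fun i => Fin.snoc_castSucc _ _ _⟩
  left_inv w := by
    obtain ⟨w, rfl⟩ := w
    exact Subtype.ext (Fin.snoc_init_self w)
  right_inv a := by
    have h := Fin.snoc_last (α := fun i : Fin (n+1) => X i.val) a z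
    exact h

/-- `g` with `ρ n g z = v` maps descendants of `z` to descendants of `v`. -/
def descEquiv (A : TreeAction X G) {n : ℕ} {z v : Vert X n} (g : G)
    (h : A.ρ n g z = v) : Desc X z ≃ Desc X v where
  toFun w := ⟨A.ρ (n+1) g w.1, by rw [A.compat, w.2, h]⟩
  invFun w := ⟨A.ρ (n+1) g⁻¹ w.1, by
    rw [A.compat, w.2, ← h, ← Equiv.Perm.mul_apply, ← map_mul, inv_mul_cancel, map_one,
      Equiv.Perm.one_apply]⟩
  left_inv w := Subtype.ext (by
    show A.ρ (n+1) g⁻¹ (A.ρ (n+1) g w.1) = w.1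
    rw [← Equiv.Perm.mul_apply, ← map_mul, inv_mul_cancel, map_one, Equiv.Perm.one_apply])
  right_inv w := Subtype.ext (by
    show A.ρ (n+1) g (A.ρ (n+1) g⁻¹ w.1) = w.1
    rw [← Equiv.Perm.mul_apply, ← map_mul, mul_inv_cancel, map_one, Equiv.Perm.one_apply])

lemma levelRep_apply (F : Type) [Field F] (A : TreeAction X G) (m : ℕ) (g : G)
    (x : Vert X m →₀ F) (w : Vert X m) :
    levelRep F A m g x w = x (A.ρ m g⁻¹ w) := by
  letI : MulAction G (Vert X m) := MulAction.compHom _ (A.ρ m)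
  have hinj : Function.Injective (fun y : Vert X m => g • y) := MulAction.injective g
  have hw : w = g • (g⁻¹ • w) := (smul_inv_smul g w).symm
  show Finsupp.mapDomain (g • ·) x w = _
  conv_lhs => rw [hw]
  rw [Finsupp.mapDomain_apply hinj]
  rfl

lemma descRep_apply (F : Type) [Field F] (A : TreeAction X G) {n : ℕ} (v : Vert X n)
    (s : stab A v) (y : Desc X v →₀ F) (w : Desc X v) :
    descRep F A v s y w = y (descPermHom A v s⁻¹ w) := by
  letI : MulAction (stab A v) (Desc X v) := MulAction.compHom _ (descPermHom A v)
  have hinj : Function.Injective (fun y : Desc X v => s • y) := MulAction.injective s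
  have hw : w = s • (s⁻¹ • w) := (smul_inv_smul s w).symm
  show Finsupp.mapDomain (s • ·) y w = _
  conv_lhs => rw [hw]
  rw [Finsupp.mapDomain_apply hinj]
  rfl

end AuxHelpers

section AuxMain

open Finset

variable {X : ℕ → Type} [∀ i, Fintype (X i)] [∀ i, DecidableEq (X i)] {G : Type} [Group G]

instance descFintype {n : ℕ} (v : Vert X n) : Fintype (Desc X v) :=
  inferInstanceAs (Fintype {w : Vert X (n+1) // pred w = v})

/-- Push-forward along `pred`. -/
noncomputable def Pmap (F : Type) [Field F] (n : ℕ) :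
    (Vert X (n+1) →₀ F) →ₗ[F] (Vert X n →₀ F) where
  toFun x := Finsupp.equivFunOnFinite.symm fun z =>
    ∑ w : Vert X (n+1), if pred w = z then x w else 0
  map_add' a b := by
    ext z
    simp only [Finsupp.coe_equivFunOnFinite_symm, Finsupp.add_apply]
    rw [← Finset.sum_add_distrib]
    refine Finset.sum_congr rfl fun w _ => ?_
    split <;> simp
  map_smul' c a := by
    ext z
    simp only [Finsupp.coe_equivFunOnFinite_symm, Finsupp.smul_apply,
      RingHom.id_apply, smul_eq_mul, Finset.mul_sum]
    refine Finset.sum_congr rfl fun w _ => ?_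
    split <;> simp

lemma Pmap_apply (F : Type) [Field F] {n : ℕ} (x : Vert X (n+1) →₀ F) (z : Vert X n) :
    Pmap F n x z = ∑ w : Vert X (n+1), if pred w = z then x w else 0 :=
  rfl

lemma Pmap_apply' (F : Type) [Field F] {n : ℕ} (x : Vert X (n+1) →₀ F) (z : Vert X n) :
    Pmap F n x z = ∑ w : Desc X z, x w.1 := by
  rw [Pmap_apply]
  exact (aux_sum_fiber (fun w => pred w = z) (fun w => x w)).symm

lemma Pmap_equivariant (A : TreeAction X G) (F : Type) [Field F] {n : ℕ} (g : G)
    (x : Vert X (n+1) →₀ F) (z : Vert X n) :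
    Pmap F n (levelRep F A (n+1) g x) z = Pmap F n x (A.ρ n g⁻¹ z) := by
  rw [Pmap_apply, Pmap_apply]
  refine Fintype.sum_equiv (A.ρ (n+1) g⁻¹) _ _ fun w => ?_
  rw [levelRep_apply]
  have hc : pred (A.ρ (n+1) g⁻¹ w) = A.ρ n g⁻¹ z ↔ pred w = z := by
    rw [A.compat]
    exact Equiv.apply_eq_iff_eq _
  by_cases h : pred w = z
  · rw [if_pos h, if_pos (hc.mpr h)]
  · rw [if_neg h, if_neg (fun hh => h (hc.mp hh))]

end AuxMain
section AuxMain2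

open Finset

variable {X : ℕ → Type} [∀ i, Fintype (X i)] [∀ i, DecidableEq (X i)] {G : Type} [Group G]
  (A : TreeAction X G) (F : Type) [Field F] {n : ℕ} (v : Vert X n)

/-- The basic "restriction twisted by `g`" map. -/
noncomputable def Rmap (x : Vert X (n+1) →₀ F) (g : G) : Desc X v →₀ F :=
  Finsupp.equivFunOnFinite.symm fun w =>
    x (A.ρ (n+1) g⁻¹ w.1) - (Fintype.card (X n) : F)⁻¹ * Pmap F n x (A.ρ n g⁻¹ v)

lemma Rmap_apply (x : Vert X (n+1) →₀ F) (g : G) (w : Desc X v) :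
    Rmap A F v x g w
      = x (A.ρ (n+1) g⁻¹ w.1) - (Fintype.card (X n) : F)⁻¹ * Pmap F n x (A.ρ n g⁻¹ v) :=
  rfl

lemma sum_desc_eq (x : Vert X (n+1) →₀ F) (g : G) :
    ∑ w : Desc X v, x (A.ρ (n+1) g⁻¹ w.1) = Pmap F n x (A.ρ n g⁻¹ v) := by
  rw [Pmap_apply']
  exact Fintype.sum_equiv (descEquiv A g⁻¹ rfl) _ _ (fun w => rfl)

lemma card_desc (z : Vert X n) : Fintype.card (Desc X z) = Fintype.card (X n) :=
  Fintype.card_congr (fiberEquiv z)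

lemma Rmap_mem (hc : (Fintype.card (X n) : F) ≠ 0) (x : Vert X (n+1) →₀ F) (g : G) :
    Rmap A F v x g ∈ zeroSum F (Desc X v) := by
  rw [aux_mem_zeroSum_iff]
  simp only [Rmap_apply]
  rw [Finset.sum_sub_distrib, sum_desc_eq, Finset.sum_const, Finset.card_univ, card_desc,
    nsmul_eq_mul, ← mul_assoc, mul_inv_cancel₀ hc, one_mul, sub_self]

lemma Rmap_equivariant (g h : G) (x : Vert X (n+1) →₀ F) :
    Rmap A F v (levelRep F A (n+1) g x) h = Rmap A F v x (h * g) := by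
  ext w
  rw [Rmap_apply, Rmap_apply, levelRep_apply, Pmap_equivariant, mul_inv_rev, map_mul,
    Equiv.Perm.mul_apply, map_mul, Equiv.Perm.mul_apply]

/-- The stabiliser-shift identity for `Rmap`. -/
lemma Rmap_shift (s : stab A v) (g : G) (x : Vert X (n+1) →₀ F) :
    Rmap A F v x ((s : G) * g) = descRep F A v s (Rmap A F v x g) := by
  ext w
  rw [descRep_apply, Rmap_apply, Rmap_apply]
  have h1 : A.ρ (n+1) ((s : G) * g)⁻¹ w.1
      = A.ρ (n+1) g⁻¹ ((descPermHom A v s⁻¹ w).1) := by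
    show _ = A.ρ (n+1) g⁻¹ (A.ρ (n+1) ((s⁻¹ : stab A v) : G) w.1)
    rw [mul_inv_rev, map_mul, Equiv.Perm.mul_apply]
    rfl
  have h2 : A.ρ n ((s : G) * g)⁻¹ v = A.ρ n g⁻¹ v := by
    rw [mul_inv_rev, map_mul, Equiv.Perm.mul_apply]
    have hs : A.ρ n (s : G)⁻¹ v = v := (stab A v).inv_mem s.2
    rw [hs]
  rw [h1, h2]

end AuxMain2
section AuxMain3

open Finset

variable {X : ℕ → Type} [∀ i, Fintype (X i)] [∀ i, DecidableEq (X i)] {G : Type} [Group G]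
  (A : TreeAction X G) (F : Type) [Field F] {n : ℕ} (v : Vert X n)
  {W : Type} [AddCommGroup W] [Module F W]
  (θ : Representation F (stab A v) W)
  (j : W →ₗ[F] (Desc X v →₀ F)) (hjinj : Function.Injective j)
  (hjrange : LinearMap.range j = zeroSum F (Desc X v))
  (hjequiv : ∀ (g : stab A v) (x : W), j (θ g x) = descRep F A v g (j x))
  (hc : (Fintype.card (X n) : F) ≠ 0)
  (σ : Vert X n → G) (hσ : ∀ z, A.ρ n (σ z) v = z)

/-- `W` is equivalent to the zero-sum subspace. -/
noncomputable def jEq : W ≃ₗ[F] zeroSum F (Desc X v) :=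
  (LinearEquiv.ofInjective j hjinj).trans (LinearEquiv.ofEq _ _ hjrange)

lemma jEq_coe (w : W) : (jEq F v j hjinj hjrange w : Desc X v →₀ F) = j w := rfl

lemma j_jEq_symm (y : zeroSum F (Desc X v)) :
    j ((jEq F v j hjinj hjrange).symm y) = y := by
  rw [← jEq_coe (hjinj := hjinj) (hjrange := hjrange), LinearEquiv.apply_symm_apply]

include hjrange in
lemma j_mem_zeroSum (w : W) : j w ∈ zeroSum F (Desc X v) :=
  hjrange ▸ LinearMap.mem_range_self j w

include hjrange in
lemma sum_j_zero (w : W) : ∑ d : Desc X v, j w d = 0 :=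
  (aux_mem_zeroSum_iff _).mp (j_mem_zeroSum F v j hjrange w)

lemma Rmap_add (a b : Vert X (n+1) →₀ F) (g : G) :
    Rmap A F v (a + b) g = Rmap A F v a g + Rmap A F v b g := by
  ext w
  simp only [Rmap_apply, Finsupp.add_apply, map_add]
  ring

lemma Rmap_smul (c : F) (a : Vert X (n+1) →₀ F) (g : G) :
    Rmap A F v (c • a) g = c • Rmap A F v a g := by
  ext w
  simp only [Rmap_apply, Finsupp.smul_apply, map_smul, smul_eq_mul]
  ring

/-- The forward linear map. -/
noncomputable def PhiMap :
    (Vert X (n+1) →₀ F) →ₗ[F] (Vert X n →₀ F) × ↥(IndCarrier (stab A v) θ) where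
  toFun x :=
    (Pmap F n x,
     ⟨fun g => (jEq F v j hjinj hjrange).symm ⟨Rmap A F v x g, Rmap_mem A F v hc x g⟩, by
        intro s g
        apply hjinj
        rw [hjequiv, j_jEq_symm, j_jEq_symm]
        exact Rmap_shift A F v s g x⟩)
  map_add' a b := by
    refine Prod.ext (map_add _ _ _) (Subtype.ext (funext fun g => ?_))
    show _ = (jEq F v j hjinj hjrange).symm _ + (jEq F v j hjinj hjrange).symm _
    rw [← map_add]
    exact congrArg (jEq F v j hjinj hjrange).symm (Subtype.ext (Rmap_add A F v a b g))
  map_smul' c a := by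
    refine Prod.ext (map_smul _ _ _) (Subtype.ext (funext fun g => ?_))
    show _ = c • (jEq F v j hjinj hjrange).symm _
    rw [← map_smul]
    exact congrArg (jEq F v j hjinj hjrange).symm (Subtype.ext (Rmap_smul A F v c a g))

include hσ in
lemma sigma_inv (z : Vert X n) : A.ρ n (σ z)⁻¹ z = v := by
  have h := hσ z
  calc A.ρ n (σ z)⁻¹ z = A.ρ n (σ z)⁻¹ (A.ρ n (σ z) v) := by rw [h]
  _ = v := by
      rw [← Equiv.Perm.mul_apply, ← map_mul, inv_mul_cancel, map_one, Equiv.Perm.one_apply]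

include hσ in
/-- Translate a vertex of level `n+1` to a descendant of `v`. -/
def toDescV (w : Vert X (n+1)) : Desc X v :=
  ⟨A.ρ (n+1) (σ (pred w))⁻¹ w, by rw [A.compat]; exact sigma_inv A v σ hσ (pred w)⟩

/-- The inverse linear map. -/
noncomputable def PsiMap :
    ((Vert X n →₀ F) × ↥(IndCarrier (stab A v) θ)) →ₗ[F] (Vert X (n+1) →₀ F) where
  toFun p := Finsupp.equivFunOnFinite.symm fun w =>
    j (p.2.1 (σ (pred w))⁻¹) (toDescV A v σ hσ w)
      + (Fintype.card (X n) : F)⁻¹ * p.1 (pred w)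
  map_add' p q := by
    ext w
    simp only [Finsupp.coe_equivFunOnFinite_symm, Finsupp.add_apply,
      Prod.fst_add, Prod.snd_add, Submodule.coe_add, Pi.add_apply, map_add]
    ring
  map_smul' c p := by
    ext w
    simp only [Finsupp.coe_equivFunOnFinite_symm, Finsupp.smul_apply,
      Prod.smul_fst, Prod.smul_snd, Submodule.coe_smul, Pi.smul_apply, map_smul,
      RingHom.id_apply, smul_eq_mul]
    ring

lemma PsiMap_apply (p : (Vert X n →₀ F) × ↥(IndCarrier (stab A v) θ)) (w : Vert X (n+1)) :
    PsiMap A F v θ j σ hσ p w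
      = j (p.2.1 (σ (pred w))⁻¹) (toDescV A v σ hσ w)
        + (Fintype.card (X n) : F)⁻¹ * p.1 (pred w) :=
  rfl

end AuxMain3
section AuxMain4

open Finset

variable {X : ℕ → Type} [∀ i, Fintype (X i)] [∀ i, DecidableEq (X i)] {G : Type} [Group G]
  (A : TreeAction X G) (F : Type) [Field F] {n : ℕ} (v : Vert X n)
  {W : Type} [AddCommGroup W] [Module F W]
  (θ : Representation F (stab A v) W)
  (j : W →ₗ[F] (Desc X v →₀ F)) (hjinj : Function.Injective j)
  (hjrange : LinearMap.range j = zeroSum F (Desc X v))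
  (hjequiv : ∀ (g : stab A v) (x : W), j (θ g x) = descRep F A v g (j x))
  (hc : (Fintype.card (X n) : F) ≠ 0)
  (σ : Vert X n → G) (hσ : ∀ z, A.ρ n (σ z) v = z)

lemma PhiMap_fst (x : Vert X (n+1) →₀ F) :
    (PhiMap A F v θ j hjinj hjrange hjequiv hc x).1 = Pmap F n x := rfl

lemma PhiMap_snd (x : Vert X (n+1) →₀ F) (g : G) :
    j ((PhiMap A F v θ j hjinj hjrange hjequiv hc x).2.1 g) = Rmap A F v x g := by
  show j ((jEq F v j hjinj hjrange).symm ⟨Rmap A F v x g, Rmap_mem A F v hc x g⟩) = _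
  rw [j_jEq_symm]

include hjinj hjrange hjequiv hc hσ in
lemma j_f_eval (f : ↥(IndCarrier (stab A v) θ)) (g : G) (w : Desc X v) :
    j (f.1 g) w = j (f.1 (σ (A.ρ n g⁻¹ v))⁻¹)
      (toDescV A v σ hσ (A.ρ (n+1) g⁻¹ w.1)) := by
  set z := A.ρ n g⁻¹ v with hz
  have hs : g * σ z ∈ stab A v := by
    show A.ρ n (g * σ z) v = v
    rw [map_mul, Equiv.Perm.mul_apply, hσ z, hz, ← Equiv.Perm.mul_apply, ← map_mul,
      mul_inv_cancel, map_one, Equiv.Perm.one_apply]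
  have hf : f.1 ((((⟨g * σ z, hs⟩ : stab A v) : G)) * (σ z)⁻¹) = θ ⟨g * σ z, hs⟩ (f.1 ((σ z)⁻¹)) :=
    f.2 ⟨g * σ z, hs⟩ ((σ z)⁻¹)
  have hgz : ((⟨g * σ z, hs⟩ : stab A v) : G) * (σ z)⁻¹ = g := mul_inv_cancel_right g (σ z)
  rw [hgz] at hf
  rw [hf, hjequiv, descRep_apply]
  congr 1
  apply Subtype.ext
  show A.ρ (n+1) (((⟨g * σ z, hs⟩ : stab A v)⁻¹ : stab A v) : G) w.1
      = A.ρ (n+1) (σ (pred (A.ρ (n+1) g⁻¹ w.1)))⁻¹ (A.ρ (n+1) g⁻¹ w.1)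
  have hpw : pred (A.ρ (n+1) g⁻¹ w.1) = z := by rw [A.compat, w.2]
  rw [hpw]
  show A.ρ (n+1) (g * σ z)⁻¹ w.1 = _
  rw [mul_inv_rev, map_mul, Equiv.Perm.mul_apply]

include hjinj hjrange hjequiv hc hσ in
lemma Pmap_PsiMap (p : (Vert X n →₀ F) × ↥(IndCarrier (stab A v) θ)) :
    Pmap F n (PsiMap A F v θ j σ hσ p) = p.1 := by
  ext z
  rw [Pmap_apply']
  have key : ∀ w : Desc X z, PsiMap A F v θ j σ hσ p w.1
      = j (p.2.1 (σ z)⁻¹) ((descEquiv A (σ z)⁻¹ (sigma_inv A v σ hσ z)) w)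
        + (Fintype.card (X n) : F)⁻¹ * p.1 z := by
    rintro ⟨w, rfl⟩
    rw [PsiMap_apply]
    rfl
  rw [Finset.sum_congr rfl (fun w _ => key w), Finset.sum_add_distrib,
    Equiv.sum_comp (descEquiv A (σ z)⁻¹ (sigma_inv A v σ hσ z))
      (fun d => j (p.2.1 (σ z)⁻¹) d),
    sum_j_zero F v j hjrange, Finset.sum_const, Finset.card_univ, card_desc,
    nsmul_eq_mul, ← mul_assoc, mul_inv_cancel₀ hc, one_mul, zero_add]

include hjinj hjrange hjequiv hc hσ in
lemma Rmap_PsiMap (p : (Vert X n →₀ F) × ↥(IndCarrier (stab A v) θ)) (g : G) :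
    Rmap A F v (PsiMap A F v θ j σ hσ p) g = j (p.2.1 g) := by
  ext w
  rw [Rmap_apply, PsiMap_apply, Pmap_PsiMap A F v θ j hjinj hjrange hjequiv hc σ hσ,
    j_f_eval A F v θ j hjinj hjrange hjequiv hc σ hσ p.2 g w]
  have hpw : pred (A.ρ (n+1) g⁻¹ w.1) = A.ρ n g⁻¹ v := by rw [A.compat, w.2]
  rw [hpw]
  ring

include hjinj hjrange hjequiv hc hσ in
lemma PsiMap_PhiMap (x : Vert X (n+1) →₀ F) :
    PsiMap A F v θ j σ hσ (PhiMap A F v θ j hjinj hjrange hjequiv hc x) = x := by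
  ext w
  rw [PsiMap_apply, PhiMap_snd A F v θ j hjinj hjrange hjequiv hc, PhiMap_fst, Rmap_apply]
  have h1 : A.ρ (n+1) ((σ (pred w))⁻¹)⁻¹ ((toDescV A v σ hσ w).1) = w := by
    show A.ρ (n+1) ((σ (pred w))⁻¹)⁻¹ (A.ρ (n+1) (σ (pred w))⁻¹ w) = w
    rw [inv_inv, ← Equiv.Perm.mul_apply, ← map_mul, mul_inv_cancel, map_one,
      Equiv.Perm.one_apply]
  have h2 : A.ρ n ((σ (pred w))⁻¹)⁻¹ v = pred w := by rw [inv_inv]; exact hσ _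
  rw [h1, h2]
  ring

end AuxMain4
set_option synthInstance.maxHeartbeats 400000 in
/-- For a spherically transitive action of `G` and `char F` not dividing the
Steinitz order of the closure of `G`, the permutation representation of `G` on
`F[L_{n+1}]` is isomorphic to the direct sum of the permutation representation on
`F[L_n]` and the representation induced from the representation `θ` of the
stabiliser of `v` on the complement `F[D(v)]⁰` of the trivial representation
in `F[D(v)]` (realised as any representation `θ` isomorphic, via an equivariant
embedding `j`, to the zero-coefficient-sum subrepresentation of `F[D(v)]`). -/
theorem stmt_12 {X : ℕ → Type} [∀ i, Fintype (X i)] {G : Type} [Group G]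
    (A : TreeAction X G) (F : Type) [Field F]
    (hchar : ∀ k : ℕ, ¬ (ringChar F ∣ Nat.card (A.ρ k).range))
    (hsph : SphTrans A) {n : ℕ} (v : Vert X n)
    (u : Vert X (n + 1)) (hu : pred u = v)
    (W : Type) [AddCommGroup W] [Module F W]
    (θ : Representation F (stab A v) W)
    (j : W →ₗ[F] (Desc X v →₀ F)) (hjinj : Function.Injective j)
    (hjrange : LinearMap.range j = zeroSum F (Desc X v))
    (hjequiv : ∀ (g : stab A v) (x : W), j (θ g x) = descRep F A v g (j x)) :
    ∃ e : (Vert X (n + 1) →₀ F) ≃ₗ[F] ((Vert X n →₀ F) × IndCarrier (stab A v) θ),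
      ∀ (g : G) (x : Vert X (n + 1) →₀ F),
        e (levelRep F A (n + 1) g x) =
          (levelRep F A n g (e x).1, IndRep (stab A v) θ g (e x).2) := by
  classical
  -- characteristic condition
  have hc : (Fintype.card (X n) : F) ≠ 0 := by
    intro h0
    apply hchar (n + 1)
    refine dvd_trans ((ringChar.spec F _).mp h0) ?_
    have e3 : Vert X (n + 1) ≃ X n × Vert X n :=
      (Fin.snocEquiv fun i : Fin (n + 1) => X i.val).symm
    have h21 : Fintype.card (X n) ∣ Nat.card (Vert X (n + 1)) := by
      rw [Nat.card_congr e3, Nat.card_prod, Nat.card_eq_fintype_card]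
      exact dvd_mul_right _ _
    refine h21.trans ?_
    haveI : MulAction.IsPretransitive (A.ρ (n + 1)).range (Vert X (n + 1)) := by
      constructor
      intro a b
      obtain ⟨g, hg⟩ := hsph (n + 1) a b
      refine ⟨⟨A.ρ (n + 1) g, g, rfl⟩, ?_⟩
      show A.ρ (n + 1) g a = b
      exact hg
    rw [← MulAction.index_stabilizer_of_transitive (A.ρ (n + 1)).range u]
    exact Dvd.intro_left _ (Subgroup.card_mul_index _)
  -- coset representatives
  have hσ' : ∀ z : Vert X n, ∃ g : G, A.ρ n g v = z := fun z => hsph n v z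
  choose σ hσ using hσ'
  refine ⟨LinearEquiv.ofLinear (PhiMap A F v θ j hjinj hjrange hjequiv hc)
    (PsiMap A F v θ j σ hσ) ?_ ?_, ?_⟩
  · apply LinearMap.ext
    intro p
    refine Prod.ext ?_ ?_
    · show (PhiMap A F v θ j hjinj hjrange hjequiv hc
        (PsiMap A F v θ j σ hσ p)).1 = p.1
      rw [PhiMap_fst]
      exact Pmap_PsiMap A F v θ j hjinj hjrange hjequiv hc σ hσ p
    · show (PhiMap A F v θ j hjinj hjrange hjequiv hc
        (PsiMap A F v θ j σ hσ p)).2 = p.2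
      refine Subtype.ext (funext fun g => ?_)
      apply hjinj
      rw [PhiMap_snd A F v θ j hjinj hjrange hjequiv hc,
        Rmap_PsiMap A F v θ j hjinj hjrange hjequiv hc σ hσ]
  · exact LinearMap.ext fun x =>
      PsiMap_PhiMap A F v θ j hjinj hjrange hjequiv hc σ hσ x
  · intro g x
    rw [LinearEquiv.ofLinear_apply, LinearEquiv.ofLinear_apply]
    refine Prod.ext ?_ ?_
    · show Pmap F n (levelRep F A (n + 1) g x) = levelRep F A n g (Pmap F n x)
      ext z
      rw [Pmap_equivariant, levelRep_apply]
    · refine Subtype.ext (funext fun h => ?_)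
      show (jEq F v j hjinj hjrange).symm ⟨Rmap A F v (levelRep F A (n + 1) g x) h, _⟩
        = (PhiMap A F v θ j hjinj hjrange hjequiv hc x).2.1 (h * g)
      exact congrArg (jEq F v j hjinj hjrange).symm
        (Subtype.ext (Rmap_equivariant A F v g h x))
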